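/- Let (X,d,μ) be a metric measure space of exact polynomial volume growth of degree q > 0 and let X₀ ⊆ X be a bounded set. There exists ε₀ ∈ (0,1) such that for every ε ∈ (0,ε₀) there exists s = s(ε,X₀) with the following property: if 𝒞 is a countable collection of pairwise disjoint closed balls B(x,r) with all centers x ∈ X₀ and all radii r ≥ s, then for every δ with 0 < δ ≤ min(ε/(4q), 1/2), the union of the δ-interiors B(x,(1−δ)r) over all balls B(x,r) ∈ 𝒞 has measure at least (1−ε) times the measure of the union of the balls in 𝒞. -/

import Mathlib

open Metric MeasureTheory Filter

set_option maxHeartbeats 1000000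

theorem stmt3 {X : Type*} [MetricSpace X] [MeasurableSpace X] [BorelSpace X] (μ : Measure X)
    (c q : ℝ) (hc : 0 < c) (hq : 0 < q)
    (hpos : ∀ (x : X) (r : ℝ), 0 < r → 0 < μ (closedBall x r) ∧ μ (closedBall x r) < ⊤)
    (hgrowth : ∀ x : X, Tendsto (fun t : ℝ => (μ (closedBall x t)).toReal / (c * t ^ q))
      atTop (nhds 1))
    (X₀ : Set X) (hX₀ : Bornology.IsBounded X₀) :
    ∃ ε₀ ∈ Set.Ioo (0:ℝ) 1, ∀ ε ∈ Set.Ioo (0:ℝ) ε₀, ∃ s : ℝ,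
      ∀ (ι : Type) (_ : Countable ι) (ctr : ι → X) (rad : ι → ℝ),
        (∀ i, ctr i ∈ X₀) → (∀ i, s ≤ rad i) →
        (Pairwise fun i j => Disjoint (closedBall (ctr i) (rad i)) (closedBall (ctr j) (rad j))) →
        ∀ δ : ℝ, 0 < δ → δ ≤ min (ε / (4 * q)) (1/2) →
          ENNReal.ofReal (1 - ε) * μ (⋃ i, closedBall (ctr i) (rad i))
            ≤ μ (⋃ i, closedBall (ctr i) ((1 - δ) * rad i)) := by
  refine ⟨1/2, by norm_num, fun ε hε => ?_⟩
  obtain ⟨hε0, hε1⟩ := hε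
  rcases X₀.eq_empty_or_nonempty with hE | ⟨x₀, hx₀⟩
  · refine ⟨1, fun ι _ ctr rad hctr hrad hdisj δ hδ0 hδle => ?_⟩
    haveI : IsEmpty ι := ⟨fun i => by simp [hE] at hctr; exact hctr i⟩
    simp
  · obtain ⟨D, hD⟩ := hX₀.subset_closedBall x₀
    have hD0 : 0 ≤ D := le_trans (by simp) (hD hx₀)
    set η := ε/16 with hη
    have hη0 : 0 < η := by positivity
    have hη1 : η < 1/32 := by rw [hη]; linarith
    -- bounds near infinity for the measure at x₀
    obtain ⟨T, hT⟩ := eventually_atTop.mp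
      (((hgrowth x₀).eventually (Icc_mem_nhds (show 1-η < 1 by linarith) (show (1:ℝ) < 1+η by linarith))).and
        (eventually_ge_atTop 1))
    have hbound : ∀ t : ℝ, T ≤ t →
        (1-η) * (c * t ^ q) ≤ (μ (closedBall x₀ t)).toReal ∧
        (μ (closedBall x₀ t)).toReal ≤ (1+η) * (c * t ^ q) := by
      intro t ht
      obtain ⟨hmem, h3⟩ := hT t ht
      obtain ⟨h1, h2⟩ := hmem
      have ht0 : (0:ℝ) < t := by linarith
      have hctq : 0 < c * t ^ q := by positivity
      constructor
      · rw [le_div_iff₀ hctq] at h1; linarith [h1]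
      · rw [div_le_iff₀ hctq] at h2; linarith [h2]
    -- tendsto of the radius-ratio term
    have hg : Tendsto (fun r : ℝ => ((r - 2*D)/(r + D)) ^ q) atTop (nhds 1) := by
      have h2 : Tendsto (fun r : ℝ => (r - 2*D)/(r + D)) atTop (nhds 1) := by
        have heq : (fun r : ℝ => 1 - 3*D/(r+D)) =ᶠ[atTop] fun r => (r - 2*D)/(r + D) := by
          filter_upwards [eventually_gt_atTop (-D)] with r hr
          have : r + D ≠ 0 := by linarith
          field_simp
          ring
        have h3 : Tendsto (fun r : ℝ => 3*D/(r+D)) atTop (nhds 0) := by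
          apply Tendsto.div_atTop tendsto_const_nhds
          exact tendsto_atTop_add_const_right _ _ tendsto_id
        have h4 : Tendsto (fun r : ℝ => 1 - 3*D/(r+D)) atTop (nhds (1 - 0)) :=
          (tendsto_const_nhds (x := (1:ℝ))).sub h3
        simpa using h4.congr' heq
      have hc1 : ContinuousAt (fun y : ℝ => y ^ q) 1 :=
        Real.continuousAt_rpow_const 1 q (Or.inl one_ne_zero)
      have := hc1.tendsto.comp h2
      simpa [Real.one_rpow, Function.comp_def] using this
    obtain ⟨s, hs⟩ := eventually_atTop.mp
      ((hg.eventually (eventually_ge_nhds (show 1 - ε/8 < 1 by linarith))).and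
        ((eventually_ge_atTop (2*(T+D))).and (eventually_ge_atTop (4*D+2))))
    refine ⟨s, fun ι hcnt ctr rad hctr hrad hdisj δ hδ0 hδle => ?_⟩
    haveI : Countable ι := hcnt
    have hδ2 : δ ≤ 1/2 := le_trans hδle (min_le_right _ _)
    have hqδ : q * δ ≤ ε/4 := by
      have h4 : δ ≤ ε/(4*q) := le_trans hδle (min_le_left _ _)
      have := mul_le_mul_of_nonneg_left h4 hq.le
      calc q * δ ≤ q * (ε/(4*q)) := this
        _ = ε/4 := by field_simp
    have hrpos : ∀ i, 0 < rad i := by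
      intro i
      have := (hs (rad i) (hrad i)).2.2
      linarith
    -- per-ball key inequality
    have key : ∀ i, ENNReal.ofReal (1-ε) * μ (closedBall (ctr i) (rad i)) ≤
        μ (closedBall (ctr i) ((1-δ)*rad i)) := by
      intro i
      set x := ctr i with hx
      set r := rad i with hr
      obtain ⟨hgr, hr1, hr2⟩ := hs r (hrad i)
      have hrpos' : (0:ℝ) < r := hrpos i
      have hr2D : (0:ℝ) < r - 2*D := by linarith
      have hrD : (0:ℝ) < r + D := by linarith
      have hδr0 : (0:ℝ) < (1-δ)*r - D := by nlinarith
      have hδrT : T ≤ (1-δ)*r - D := by nlinarith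
      have hrDT : T ≤ r + D := by nlinarith
      have hdx : dist x x₀ ≤ D := hD (hctr i)
      have hsub1 : closedBall x r ⊆ closedBall x₀ (r + D) :=
        closedBall_subset_closedBall' (by linarith)
      have hsub2 : closedBall x₀ ((1-δ)*r - D) ⊆ closedBall x ((1-δ)*r) := by
        apply closedBall_subset_closedBall'
        rw [dist_comm]
        linarith
      have hδrpos : (0:ℝ) < (1-δ)*r := by nlinarith
      have fin1 : μ (closedBall x r) ≠ ⊤ := (hpos x r hrpos').2.ne
      have fin2 : μ (closedBall x ((1-δ)*r)) ≠ ⊤ := (hpos x _ hδrpos).2.ne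
      have finb : μ (closedBall x₀ (r+D)) ≠ ⊤ := (hpos x₀ _ (by linarith)).2.ne
      have hA : (μ (closedBall x r)).toReal ≤ (1+η) * (c * (r+D) ^ q) :=
        le_trans (ENNReal.toReal_mono finb (measure_mono hsub1)) (hbound _ hrDT).2
      have hB : (1-η) * (c * ((1-δ)*r - D) ^ q) ≤ (μ (closedBall x ((1-δ)*r))).toReal :=
        le_trans (hbound _ hδrT).1 (ENNReal.toReal_mono fin2 (measure_mono hsub2))
      -- rpow estimates
      have e1 : ((1-δ)*(r - 2*D)) ^ q ≤ ((1-δ)*r - D) ^ q := by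
        apply Real.rpow_le_rpow (by nlinarith) (by nlinarith) hq.le
      have e2 : ((1-δ)*(r - 2*D)) ^ q = (1-δ) ^ q * (r - 2*D) ^ q :=
        Real.mul_rpow (by linarith) (by linarith)
      have hlog : -(2*δ) ≤ Real.log (1-δ) := by
        have h1δ : (0:ℝ) < 1 - δ := by linarith
        have := Real.log_le_sub_one_of_pos (show (0:ℝ) < (1-δ)⁻¹ by positivity)
        rw [Real.log_inv] at this
        have hinv : (1-δ)⁻¹ - 1 ≤ 2*δ := by
          rw [inv_eq_one_div, div_sub' h1δ.ne', div_le_iff₀ h1δ]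
          nlinarith
        linarith
      have e3 : 1 - ε/2 ≤ (1-δ) ^ q := by
        have h1δ : (0:ℝ) < 1 - δ := by linarith
        rw [Real.rpow_def_of_pos h1δ]
        have h5 : -(ε/2) ≤ q * Real.log (1-δ) := by
          have := mul_le_mul_of_nonneg_left hlog hq.le
          nlinarith
        calc 1 - ε/2 = 1 + (-(ε/2)) := by ring
          _ ≤ Real.exp (-(ε/2)) := by linarith [Real.add_one_le_exp (-(ε/2))]
          _ ≤ Real.exp (Real.log (1-δ) * q) := by
              apply Real.exp_le_exp.mpr; rw [mul_comm]; exact h5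
      have e4 : (1 - ε/8) * (r + D) ^ q ≤ (r - 2*D) ^ q := by
        have hdr : ((r - 2*D)/(r + D)) ^ q = (r - 2*D) ^ q / (r + D) ^ q :=
          Real.div_rpow hr2D.le hrD.le q
        rw [hdr] at hgr
        have hP : (0:ℝ) < (r + D) ^ q := Real.rpow_pos_of_pos hrD q
        rw [le_div_iff₀ hP] at hgr
        linarith
      -- combine
      have hP : (0:ℝ) < (r + D) ^ q := Real.rpow_pos_of_pos hrD q
      have hQ : (0:ℝ) < (r - 2*D) ^ q := Real.rpow_pos_of_pos hr2D q
      have hmain : (1-ε) * (μ (closedBall x r)).toReal ≤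
          (μ (closedBall x ((1-δ)*r))).toReal := by
        have c1 : (1-ε) * (μ (closedBall x r)).toReal ≤ (1-ε) * ((1+η) * (c * (r+D) ^ q)) :=
          mul_le_mul_of_nonneg_left hA (by linarith)
        have c2 : (1-ε) * ((1+η) * (c * (r+D) ^ q)) ≤
            (1-η) * (c * ((1-δ)*r - D) ^ q) := by
          have d1 : (1 - ε/2) * ((1 - ε/8) * (r + D) ^ q) ≤ (1-δ) ^ q * (r - 2*D) ^ q := by
            apply mul_le_mul e3 e4 (mul_nonneg (by linarith) hP.le) (by nlinarith [Real.rpow_nonneg (show (0:ℝ) ≤ 1-δ by linarith) q])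
          have d2 : (1-δ) ^ q * (r - 2*D) ^ q ≤ ((1-δ)*r - D) ^ q := by rw [← e2]; exact e1
          have hcube : ε*ε*ε ≤ ε*ε*(1/2) := by nlinarith
          have d3 : (1-ε)*(1+η) ≤ (1-η)*((1 - ε/2) * (1 - ε/8)) := by
            rw [hη]; nlinarith [sq_nonneg ε, hcube]
          have d4 : (1-ε)*(1+η)*(r+D)^q ≤ (1-η)*(((1-δ)*r - D) ^ q) := by
            calc (1-ε)*(1+η)*(r+D)^q ≤ (1-η)*((1 - ε/2) * (1 - ε/8))*(r+D)^q :=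
                  mul_le_mul_of_nonneg_right d3 hP.le
              _ = (1-η)*((1 - ε/2) * ((1 - ε/8)*(r+D)^q)) := by ring
              _ ≤ (1-η)*((1-δ) ^ q * (r - 2*D) ^ q) :=
                  mul_le_mul_of_nonneg_left d1 (by linarith)
              _ ≤ (1-η)*(((1-δ)*r - D) ^ q) :=
                  mul_le_mul_of_nonneg_left d2 (by linarith)
          calc (1-ε) * ((1+η) * (c * (r+D) ^ q)) = c * ((1-ε)*(1+η)*(r+D)^q) := by ring
            _ ≤ c * ((1-η)*(((1-δ)*r - D) ^ q)) := mul_le_mul_of_nonneg_left d4 hc.le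
            _ = (1-η) * (c * ((1-δ)*r - D) ^ q) := by ring
        linarith
      rw [← ENNReal.ofReal_toReal fin1, ← ENNReal.ofReal_toReal fin2,
        ← ENNReal.ofReal_mul (by linarith : (0:ℝ) ≤ 1-ε)]
      exact ENNReal.ofReal_le_ofReal hmain
    -- sum up
    have hdisj' : Pairwise fun i j => Disjoint (closedBall (ctr i) ((1-δ)*rad i))
        (closedBall (ctr j) ((1-δ)*rad j)) := by
      intro i j hij
      exact (hdisj hij).mono
        (closedBall_subset_closedBall (by nlinarith [hrpos i]))
        (closedBall_subset_closedBall (by nlinarith [hrpos j]))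
    rw [measure_iUnion hdisj (fun i => measurableSet_closedBall),
      measure_iUnion hdisj' (fun i => measurableSet_closedBall),
      ← ENNReal.tsum_mul_left]
    exact ENNReal.tsum_le_tsum key
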